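/- Uniform Law of Large Numbers for Bernoulli measures: Let C be a finite alphabet. For every δ > 0 there exists L = L(δ) > 0 such that for every Bernoulli measure p on C^ℤ, the set G(p,L,δ) of all sequences b̄ ∈ C^ℤ satisfying, for every ℓ ∈ ℕ and every c ∈ C, |p([c]) − (1/ℓ)·card{i ∈ {0,…,ℓ−1} : b_i = c}| < L/ℓ + δ, has measure p(G(p,L,δ)) > 1 − δ. -/

import Mathlib

open MeasureTheory Filter Set
open scoped ENNReal NNReal Topology

noncomputable section

namespace LBPaper

/-! ### Words, edit distance, Feldman f̄-distances -/

/-- Length of a longest common substring (order-preserving subsequence) of two `n`-words. -/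
def lcs {α : Type*} (n : ℕ) (a b : Fin n → α) : ℕ :=
  sSup {k : ℕ | ∃ i : Fin k → Fin n, ∃ j : Fin k → Fin n,
    StrictMono i ∧ StrictMono j ∧ ∀ s, a (i s) = b (j s)}

/-- The edit (f̄) distance between two `n`-words: `1 - k/n` where `k` is the length of a
longest common substring. -/
def editDist {α : Type*} (n : ℕ) (a b : Fin n → α) : ℝ :=
  1 - (lcs n a b : ℝ) / (n : ℝ)

/-- The left shift on the two-sided sequence space. -/
def shift (α : Type*) : (ℤ → α) → (ℤ → α) := fun x n => x (n + 1)

/-- The left shift on the one-sided sequence space. -/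
def shiftP (α : Type*) : (ℕ → α) → (ℕ → α) := fun x n => x (n + 1)

/-- The word given by the coordinates `0,…,n-1` of a two-sided sequence. -/
def word {α : Type*} (n : ℕ) (x : ℤ → α) : Fin n → α := fun i => x ((i : ℕ) : ℤ)

/-- The word given by the coordinates `0,…,n-1` of a one-sided sequence. -/
def wordP {α : Type*} (n : ℕ) (x : ℕ → α) : Fin n → α := fun i => x (i : ℕ)

variable {α : Type*} [MeasurableSpace α]

/-- `f̄_n` between two measures on the two-sided shift space: the infimum over all `n`-joinings
of the integral of the edit distance. -/
def fbarN (n : ℕ) (ν ν' : Measure (ℤ → α)) : ℝ :=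
  sInf {r : ℝ | ∃ m : Measure ((Fin n → α) × (Fin n → α)),
    IsProbabilityMeasure m ∧
    m.map Prod.fst = ν.map (word n) ∧
    m.map Prod.snd = ν'.map (word n) ∧
    r = ∫ q, editDist n q.1 q.2 ∂m}

/-- The `f̄`-distance between two measures on the two-sided shift space. -/
def fbar (ν ν' : Measure (ℤ → α)) : ℝ :=
  sInf {ε : ℝ | 0 < ε ∧ ∃ᶠ n in atTop, fbarN n ν ν' ≤ ε}

/-- `f̄_n` between two measures on the one-sided shift space. -/
def fbarNP (n : ℕ) (ν ν' : Measure (ℕ → α)) : ℝ :=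
  sInf {r : ℝ | ∃ m : Measure ((Fin n → α) × (Fin n → α)),
    IsProbabilityMeasure m ∧
    m.map Prod.fst = ν.map (wordP n) ∧
    m.map Prod.snd = ν'.map (wordP n) ∧
    r = ∫ q, editDist n q.1 q.2 ∂m}

/-- The `f̄`-distance between two measures on the one-sided shift space. -/
def fbarP (ν ν' : Measure (ℕ → α)) : ℝ :=
  sInf {ε : ℝ | 0 < ε ∧ ∃ᶠ n in atTop, fbarNP n ν ν' ≤ ε}

/-! ### Kolmogorov–Sinai entropy -/

/-- Shannon entropy of a finite family of sets with respect to a measure. -/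
def partEnt {X : Type*} [MeasurableSpace X] {ι : Type*} [Fintype ι]
    (μ : Measure X) (P : ι → Set X) : ℝ :=
  ∑ i, Real.negMulLog ((μ (P i)).toReal)

/-- The atom of the refinement `⋁_{j<n} T^{-j} P` indexed by the word `s`. -/
def refinedAtom {X ι : Type*} (T : X → X) (P : ι → Set X) (n : ℕ) (s : Fin n → ι) : Set X :=
  ⋂ j : Fin n, (T^[(j : ℕ)]) ⁻¹' P (s j)

/-- `P` is a finite measurable partition of `X`. -/
def IsFinPartition {X : Type*} [MeasurableSpace X] {ι : Type*} (P : ι → Set X) : Prop :=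
  (∀ i, MeasurableSet (P i)) ∧ (Pairwise fun i j => Disjoint (P i) (P j)) ∧
    (⋃ i, P i) = Set.univ

/-- The entropy of `T` with respect to a finite partition `P`
(the limit `lim (1/n) H(⋁_{j<n} T^{-j}P)` equals this infimum). -/
def entPart {X : Type*} [MeasurableSpace X] {ι : Type*} [Fintype ι]
    (T : X → X) (μ : Measure X) (P : ι → Set X) : ℝ :=
  ⨅ n : ℕ, (((n : ℝ) + 1)⁻¹) * partEnt μ (fun s : Fin (n + 1) → ι => refinedAtom T P (n + 1) s)

/-- The Kolmogorov–Sinai (measure-theoretic) entropy of `(T, μ)`: the supremum of the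
entropies with respect to all finite measurable partitions. -/
def ksEntropy {X : Type*} [MeasurableSpace X] (T : X → X) (μ : Measure X) : ℝ :=
  ⨆ (k : ℕ), ⨆ (P : Fin k → Set X), ⨆ (_ : IsFinPartition P), entPart T μ P

/-! ### Loosely Bernoulli -/

/-- `(X, S, μ)` is loosely Bernoulli: every finite measurable partition `P` is LB, i.e. for
every `ε > 0` there are `n` and a collection `G` of atoms of `⋁_{j<n} S^{-j}P` of total
measure `> 1 - ε` that are pairwise `ε`-close in the edit distance (atoms identified with
`n`-words over the index alphabet of `P`). -/
def IsLB {X : Type*} [MeasurableSpace X] (S : X → X) (μ : Measure X) : Prop :=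
  ∀ (k : ℕ) (P : Fin k → Set X), IsFinPartition P →
    ∀ ε : ℝ, 0 < ε → ∃ n : ℕ, 0 < n ∧ ∃ G : Finset (Fin n → Fin k),
      (1 - ε : ℝ) < (μ (⋃ s ∈ G, refinedAtom S P n s)).toReal ∧
      ∀ s ∈ G, ∀ t ∈ G, editDist n s t < ε

/-! ### Bernoulli measures -/

/-- `p` is a probability vector on the finite alphabet `α`. -/
def IsProbVector {α : Type*} [Fintype α] (p : α → ℝ) : Prop :=
  (∀ a, 0 ≤ p a) ∧ ∑ a, p a = 1

/-- `ν` is the Bernoulli (i.i.d. product) measure on `α^ℤ` with marginal probability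
vector `p`. -/
def IsBernoulli {α : Type*} [MeasurableSpace α] (p : α → ℝ) (ν : Measure (ℤ → α)) : Prop :=
  IsProbabilityMeasure ν ∧
    ∀ (s : Finset ℤ) (f : ℤ → α),
      (ν {x : ℤ → α | ∀ i ∈ s, x i = f i}).toReal = ∏ i ∈ s, p (f i)

end LBPaper

namespace LBPaper

section ULLNAux

open Finset

variable {γ : Type*} [Fintype γ] [DecidableEq γ]

private lemma card_small_image {ℓ : ℕ} :
    ((Finset.univ : Finset (Fin 4 → Fin ℓ)).filter
      fun v => (Finset.univ.image v).card ≤ 2).card ≤ 16 * ℓ ^ 2 := by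
  classical
  rcases Nat.eq_zero_or_pos ℓ with h0 | hℓ
  · subst h0
    haveI : IsEmpty (Fin 4 → Fin 0) := ⟨fun v => (v 0).elim0⟩
    have h1 := Finset.card_le_card (Finset.filter_subset
      (fun v : Fin 4 → Fin 0 => (Finset.univ.image v).card ≤ 2) Finset.univ)
    have h2 : (Finset.univ : Finset (Fin 4 → Fin 0)).card = 0 := by
      rw [Finset.card_univ, Fintype.card_eq_zero]
    omega
  · have hsurj : Set.SurjOn
        (fun x : Fin ℓ × Fin ℓ × (Fin 4 → Bool) => (fun k => if x.2.2 k then x.1 else x.2.1))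
        ↑(Finset.univ : Finset (Fin ℓ × Fin ℓ × (Fin 4 → Bool)))
        ↑((Finset.univ : Finset (Fin 4 → Fin ℓ)).filter
          fun v => (Finset.univ.image v).card ≤ 2) := by
      intro v hv
      simp only [Finset.coe_filter, Set.mem_setOf_eq, Finset.mem_univ, true_and] at hv
      obtain ⟨a, ha⟩ : (Finset.univ.image v).Nonempty := by
        refine Finset.image_nonempty.2 ⟨0, Finset.mem_univ _⟩
      obtain ⟨b, hb⟩ : ∃ b, Finset.univ.image v ⊆ {a, b} := by
        by_cases hex : ∃ x ∈ Finset.univ.image v, x ≠ a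
        · obtain ⟨b, hbmem, hba⟩ := hex
          refine ⟨b, fun x hx => ?_⟩
          by_contra hxc
          simp only [Finset.mem_insert, Finset.mem_singleton, not_or] at hxc
          have hsub : ({x, a, b} : Finset (Fin ℓ)) ⊆ Finset.univ.image v := by
            intro y hy
            simp only [Finset.mem_insert, Finset.mem_singleton] at hy
            rcases hy with rfl | rfl | rfl <;> assumption
          have hc3 : ({x, a, b} : Finset (Fin ℓ)).card = 3 := by
            rw [Finset.card_insert_of_notMem (by simp [hxc.1, hxc.2]),
              Finset.card_insert_of_notMem (by simp [Ne.symm hba]), Finset.card_singleton]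
          have := Finset.card_le_card hsub
          omega
        · push_neg at hex
          exact ⟨a, fun x hx => by simp [hex x hx]⟩
      refine ⟨(a, b, fun k => decide (v k = a)), by simp, ?_⟩
      funext k
      simp only
      by_cases hk : v k = a
      · simp [hk]
      · have := hb (Finset.mem_image_of_mem v (Finset.mem_univ k))
        simp only [Finset.mem_insert, Finset.mem_singleton] at this
        rcases this with h | h
        · exact absurd h hk
        · rw [if_neg (by simp [hk]), h]
    have hcard := Finset.card_le_card_of_surjOn _ hsurj
    have huniv : (Finset.univ : Finset (Fin ℓ × Fin ℓ × (Fin 4 → Bool))).card = ℓ * (ℓ * 16) := by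
      simp [Finset.card_univ]
    calc ((Finset.univ : Finset (Fin 4 → Fin ℓ)).filter
          fun v => (Finset.univ.image v).card ≤ 2).card ≤ ℓ * (ℓ * 16) := huniv ▸ hcard
      _ ≤ 16 * ℓ ^ 2 := by ring_nf; omega

private lemma sum_g_zero (p : γ → ℝ) (hp1 : ∑ a, p a = 1) (c : γ) :
    ∑ a, p a * ((if a = c then (1 : ℝ) else 0) - p c) = 0 := by
  have h1 : ∑ a, p a * (if a = c then (1 : ℝ) else 0) = p c := by
    rw [Finset.sum_congr rfl (fun a _ => by rw [mul_ite, mul_one, mul_zero])]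
    simp
  simp only [mul_sub, Finset.sum_sub_distrib, h1, ← Finset.sum_mul, hp1, one_mul, sub_self]

private lemma moment_bound (p : γ → ℝ) (hp0 : ∀ a, 0 ≤ p a) (hp1 : ∑ a, p a = 1) (c : γ)
    {ℓ : ℕ} :
    ∑ w : Fin ℓ → γ, (∏ i, p (w i)) *
      (∑ i, ((if w i = c then (1 : ℝ) else 0) - p c)) ^ 4 ≤ 16 * (ℓ : ℝ) ^ 2 := by
  classical
  set g : γ → ℝ := fun a => (if a = c then (1 : ℝ) else 0) - p c with hgdef
  have hpc0 : 0 ≤ p c := hp0 c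
  have hpc1 : p c ≤ 1 := by
    rw [← hp1]
    exact Finset.single_le_sum (fun a _ => hp0 a) (Finset.mem_univ c)
  have hgabs : ∀ a, |g a| ≤ 1 := by
    intro a
    simp only [hgdef]
    by_cases h : a = c <;> simp [h, abs_le] <;> constructor <;> linarith
  set m : (Fin 4 → Fin ℓ) → Fin ℓ → ℕ :=
    fun v i => (Finset.univ.filter fun k => v k = i).card with hmdef
  set E : (Fin 4 → Fin ℓ) → ℝ := fun v => ∏ i : Fin ℓ, ∑ a, p a * g a ^ m v i with hEdef
  -- rewrite LHS as ∑ v, E v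
  have step1 : ∑ w : Fin ℓ → γ, (∏ i, p (w i)) * (∑ i, g (w i)) ^ 4
      = ∑ v : Fin 4 → Fin ℓ, E v := by
    have h1 : ∀ w : Fin ℓ → γ, (∑ i, g (w i)) ^ 4
        = ∑ v : Fin 4 → Fin ℓ, ∏ k, g (w (v k)) := fun w =>
      Fintype.sum_pow (fun i => g (w i)) 4
    calc ∑ w : Fin ℓ → γ, (∏ i, p (w i)) * (∑ i, g (w i)) ^ 4
        = ∑ w : Fin ℓ → γ, ∑ v : Fin 4 → Fin ℓ, (∏ i, p (w i)) * ∏ k, g (w (v k)) := by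
          refine Finset.sum_congr rfl fun w _ => ?_
          rw [h1 w, Finset.mul_sum]
      _ = ∑ v : Fin 4 → Fin ℓ, ∑ w : Fin ℓ → γ, (∏ i, p (w i)) * ∏ k, g (w (v k)) :=
          Finset.sum_comm
      _ = ∑ v : Fin 4 → Fin ℓ, E v := by
          refine Finset.sum_congr rfl fun v _ => ?_
          have h2 : ∀ w : Fin ℓ → γ, (∏ k, g (w (v k)))
              = ∏ i : Fin ℓ, g (w i) ^ m v i := by
            intro w
            rw [Finset.prod_comp (fun i => g (w i)) v]
            refine Finset.prod_subset (Finset.subset_univ _) fun i _ hi => ?_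
            have : (Finset.univ.filter fun k => v k = i) = ∅ := by
              refine Finset.filter_eq_empty_iff.2 fun k _ => fun hk => hi ?_
              exact hk ▸ Finset.mem_image_of_mem v (Finset.mem_univ k)
            simp [hmdef, this]
          calc ∑ w : Fin ℓ → γ, (∏ i, p (w i)) * ∏ k, g (w (v k))
              = ∑ w : Fin ℓ → γ, ∏ i, (p (w i) * g (w i) ^ m v i) := by
                refine Finset.sum_congr rfl fun w _ => ?_
                rw [h2 w, ← Finset.prod_mul_distrib]
            _ = ∏ i : Fin ℓ, ∑ a, p a * g a ^ m v i :=
                (Fintype.prod_sum fun i a => p a * g a ^ m v i).symm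
  rw [step1]
  -- E v vanishes when the image of v is large
  have hzero : ∀ v : Fin 4 → Fin ℓ, 2 < (Finset.univ.image v).card → E v = 0 := by
    intro v hv
    obtain ⟨i0, hi0mem, hi0⟩ : ∃ i0 ∈ Finset.univ.image v, m v i0 = 1 := by
      by_contra hcon
      push_neg at hcon
      have hfib : ∀ i ∈ Finset.univ.image v, 2 ≤ m v i := by
        intro i hi
        obtain ⟨k, _, hk⟩ := Finset.mem_image.1 hi
        have h1 : 1 ≤ m v i := by
          rw [hmdef]
          exact Finset.card_pos.2 ⟨k, Finset.mem_filter.2 ⟨Finset.mem_univ k, hk⟩⟩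
        have := hcon i hi
        omega
      have hsum : ∑ i ∈ Finset.univ.image v, m v i = 4 := by
        have := Finset.card_eq_sum_card_fiberwise
          (f := v) (s := Finset.univ) (t := Finset.univ.image v)
          (fun k _ => Finset.mem_image_of_mem v (Finset.mem_univ k))
        simpa [hmdef] using this.symm
      have h6 : 2 * (Finset.univ.image v).card ≤ ∑ i ∈ Finset.univ.image v, m v i := by
        calc 2 * (Finset.univ.image v).card = ∑ _i ∈ Finset.univ.image v, 2 := by
              rw [Finset.sum_const]; ring
          _ ≤ ∑ i ∈ Finset.univ.image v, m v i := Finset.sum_le_sum hfib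
      omega
    rw [hEdef]
    refine Finset.prod_eq_zero (Finset.mem_univ i0) ?_
    rw [hi0]
    simpa using sum_g_zero p hp1 c
  have habs : ∀ v : Fin 4 → Fin ℓ, E v ≤ 1 := by
    intro v
    have h1 : |E v| ≤ 1 := by
      rw [hEdef]
      simp only
      rw [Finset.abs_prod]
      refine Finset.prod_le_one (fun i _ => abs_nonneg _) fun i _ => ?_
      calc |∑ a, p a * g a ^ m v i| ≤ ∑ a, |p a * g a ^ m v i| :=
            Finset.abs_sum_le_sum_abs _ _
        _ ≤ ∑ a, p a := by
            refine Finset.sum_le_sum fun a _ => ?_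
            rw [abs_mul, abs_of_nonneg (hp0 a)]
            calc p a * |g a ^ m v i| ≤ p a * 1 := by
                  refine mul_le_mul_of_nonneg_left ?_ (hp0 a)
                  rw [abs_pow]
                  exact pow_le_one₀ (abs_nonneg _) (hgabs a)
              _ = p a := mul_one _
        _ = 1 := hp1
    exact (le_abs_self _).trans h1
  calc ∑ v : Fin 4 → Fin ℓ, E v
      = ∑ v ∈ (Finset.univ : Finset (Fin 4 → Fin ℓ)).filter
          (fun v => (Finset.univ.image v).card ≤ 2), E v := by
        refine (Finset.sum_subset (Finset.filter_subset _ _) fun v _ hv => ?_).symm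
        refine hzero v ?_
        simp only [Finset.mem_filter, Finset.mem_univ, true_and, not_le] at hv
        exact hv
    _ ≤ ∑ v ∈ (Finset.univ : Finset (Fin 4 → Fin ℓ)).filter
          (fun v => (Finset.univ.image v).card ≤ 2), (1 : ℝ) :=
        Finset.sum_le_sum fun v _ => habs v
    _ = ((Finset.univ : Finset (Fin 4 → Fin ℓ)).filter
          (fun v => (Finset.univ.image v).card ≤ 2)).card := by rw [Finset.sum_const]; simp
    _ ≤ 16 * (ℓ : ℝ) ^ 2 := by
        have := card_small_image (ℓ := ℓ)
        calc (((Finset.univ : Finset (Fin 4 → Fin ℓ)).filter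
              (fun v => (Finset.univ.image v).card ≤ 2)).card : ℝ)
            ≤ ((16 * ℓ ^ 2 : ℕ) : ℝ) := by exact_mod_cast this
          _ = 16 * (ℓ : ℝ) ^ 2 := by push_cast; ring

private lemma bad_sum_bound (p : γ → ℝ) (hp0 : ∀ a, 0 ≤ p a) (hp1 : ∑ a, p a = 1) (c : γ)
    {ℓ : ℕ} (hℓ : 0 < ℓ) {t : ℝ} (ht : 0 < t) :
    ∑ w ∈ (Finset.univ : Finset (Fin ℓ → γ)).filter
        (fun w => t ≤ |p c - (ℓ : ℝ)⁻¹ * ((Finset.univ.filter fun i => w i = c).card : ℝ)|),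
      ∏ i, p (w i) ≤ 16 / ((ℓ : ℝ) ^ 2 * t ^ 4) := by
  classical
  have hℓR : (0 : ℝ) < ℓ := by exact_mod_cast hℓ
  set g : γ → ℝ := fun a => (if a = c then (1 : ℝ) else 0) - p c with hgdef
  set S : (Fin ℓ → γ) → ℝ := fun w => ∑ i, g (w i) with hSdef
  have hS : ∀ w : Fin ℓ → γ,
      S w = ((Finset.univ.filter fun i => w i = c).card : ℝ) - ℓ * p c := by
    intro w
    simp only [hSdef, hgdef, Finset.sum_sub_distrib, Finset.sum_const, Finset.card_univ,
      Fintype.card_fin, nsmul_eq_mul, Finset.sum_boole]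
  set Bad := (Finset.univ : Finset (Fin ℓ → γ)).filter
      (fun w => t ≤ |p c - (ℓ : ℝ)⁻¹ * ((Finset.univ.filter fun i => w i = c).card : ℝ)|)
    with hBadDef
  have hSbd : ∀ w ∈ Bad, ((ℓ : ℝ) * t) ^ 4 ≤ S w ^ 4 := by
    intro w hw
    rw [hBadDef, Finset.mem_filter] at hw
    have ht' := hw.2
    have h1 : (ℓ : ℝ) * t ≤ |S w| := by
      rw [hS w]
      have h2 : (ℓ : ℝ) * |p c - (ℓ : ℝ)⁻¹ * ((Finset.univ.filter fun i => w i = c).card : ℝ)|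
          = |(ℓ : ℝ) * p c - ((Finset.univ.filter fun i => w i = c).card : ℝ)| := by
        rw [← abs_of_pos hℓR, ← abs_mul]
        congr 1
        field_simp
        rw [abs_of_pos hℓR]
      calc (ℓ : ℝ) * t
          ≤ (ℓ : ℝ) * |p c - (ℓ : ℝ)⁻¹ *
            ((Finset.univ.filter fun i => w i = c).card : ℝ)| :=
            mul_le_mul_of_nonneg_left ht' hℓR.le
        _ = |(ℓ : ℝ) * p c - ((Finset.univ.filter fun i => w i = c).card : ℝ)| := h2
        _ = |((Finset.univ.filter fun i => w i = c).card : ℝ) - (ℓ : ℝ) * p c| :=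
            abs_sub_comm _ _
    calc ((ℓ : ℝ) * t) ^ 4 ≤ |S w| ^ 4 :=
          pow_le_pow_left₀ (by positivity) h1 4
      _ = S w ^ 4 := by rw [pow_abs, abs_of_nonneg (by positivity)]
  have key : ((ℓ : ℝ) * t) ^ 4 * (∑ w ∈ Bad, ∏ i, p (w i)) ≤ 16 * (ℓ : ℝ) ^ 2 := by
    calc ((ℓ : ℝ) * t) ^ 4 * (∑ w ∈ Bad, ∏ i, p (w i))
        = ∑ w ∈ Bad, (∏ i, p (w i)) * ((ℓ : ℝ) * t) ^ 4 := by
          rw [Finset.mul_sum]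
          exact Finset.sum_congr rfl fun w _ => mul_comm _ _
      _ ≤ ∑ w ∈ Bad, (∏ i, p (w i)) * S w ^ 4 :=
          Finset.sum_le_sum fun w hw =>
            mul_le_mul_of_nonneg_left (hSbd w hw) (Finset.prod_nonneg fun i _ => hp0 _)
      _ ≤ ∑ w : Fin ℓ → γ, (∏ i, p (w i)) * S w ^ 4 :=
          Finset.sum_le_sum_of_subset_of_nonneg (Finset.filter_subset _ _)
            fun w _ _ => mul_nonneg (Finset.prod_nonneg fun i _ => hp0 _) (by positivity)
      _ ≤ 16 * (ℓ : ℝ) ^ 2 := moment_bound p hp0 hp1 c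
  have h4 : (0 : ℝ) < ((ℓ : ℝ) * t) ^ 4 := by positivity
  have h5 : (∑ w ∈ Bad, ∏ i, p (w i)) ≤ 16 * (ℓ : ℝ) ^ 2 / ((ℓ : ℝ) * t) ^ 4 :=
    (le_div_iff₀ h4).2 (by linarith [key])
  calc ∑ w ∈ Bad, ∏ i, p (w i) ≤ 16 * (ℓ : ℝ) ^ 2 / ((ℓ : ℝ) * t) ^ 4 := h5
    _ = 16 / ((ℓ : ℝ) ^ 2 * t ^ 4) := by
        field_simp

end ULLNAux


section ULLNMeas

set_option linter.unusedSectionVars false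

open Finset

variable {γ : Type*} [Fintype γ] [DecidableEq γ] [MeasurableSpace γ]
  [MeasurableSingletonClass γ]

private lemma word_event_eq (p : γ → ℝ) {ν : Measure (ℤ → γ)} (hb : IsBernoulli p ν)
    {ℓ : ℕ} (hℓ : 0 < ℓ) (Q : (Fin ℓ → γ) → Prop) [DecidablePred Q] :
    MeasurableSet {b : ℤ → γ | Q (word ℓ b)} ∧
      (ν {b : ℤ → γ | Q (word ℓ b)}).toReal = ∑ w ∈ Finset.univ.filter Q, ∏ i, p (w i) := by
  classical
  haveI := hb.1
  set sI : Finset ℤ := (Finset.range ℓ).image ((↑) : ℕ → ℤ) with hsI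
  set fw : (Fin ℓ → γ) → ℤ → γ :=
    fun w i => if h : i.toNat < ℓ then w ⟨i.toNat, h⟩ else w ⟨0, hℓ⟩ with hfw
  have hfw_eval : ∀ (w : Fin ℓ → γ) (j : ℕ) (hj : j < ℓ), fw w (j : ℤ) = w ⟨j, hj⟩ := by
    intro w j hj
    rw [hfw]
    simp only [Int.toNat_natCast]
    rw [dif_pos hj]
  set Cyl : (Fin ℓ → γ) → Set (ℤ → γ) := fun w => {x | ∀ i ∈ sI, x i = fw w i} with hCyl
  have hmem : ∀ (b : ℤ → γ) (w : Fin ℓ → γ), b ∈ Cyl w ↔ word ℓ b = w := by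
    intro b w
    constructor
    · intro h
      funext i
      have hi : (((i : ℕ) : ℤ)) ∈ sI := Finset.mem_image_of_mem _ (Finset.mem_range.2 i.isLt)
      have h2 := h _ hi
      rw [word]
      rw [h2, hfw_eval w (i : ℕ) i.isLt]
    · rintro rfl i hi
      obtain ⟨j, hj, rfl⟩ := Finset.mem_image.1 hi
      rw [hfw_eval _ j (Finset.mem_range.1 hj)]
      rfl
  have hCylMeas : ∀ w, MeasurableSet (Cyl w) := by
    intro w
    have h1 : Cyl w = ⋂ i ∈ sI, (fun x : ℤ → γ => x i) ⁻¹' {fw w i} := by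
      ext x
      simp [hCyl, Set.mem_iInter]
    rw [h1]
    exact Finset.measurableSet_biInter _ fun i _ =>
      measurable_pi_apply i (measurableSet_singleton _)
  have hset : {b : ℤ → γ | Q (word ℓ b)} = ⋃ w ∈ Finset.univ.filter Q, Cyl w := by
    ext b
    simp only [Set.mem_setOf_eq, Set.mem_iUnion, Finset.mem_filter, Finset.mem_univ, true_and,
      exists_prop]
    constructor
    · intro hQ
      exact ⟨word ℓ b, hQ, (hmem b _).2 rfl⟩
    · rintro ⟨w, hQ, hcw⟩
      rw [(hmem b w).1 hcw]
      exact hQ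
  have hdisj : Set.PairwiseDisjoint ↑(Finset.univ.filter Q) Cyl := by
    intro w _ w' _ hne
    refine Set.disjoint_left.2 fun b hb hb' => hne ?_
    rw [← (hmem b w).1 hb, (hmem b w').1 hb']
  have hmeasset : MeasurableSet {b : ℤ → γ | Q (word ℓ b)} := by
    rw [hset]
    exact (Finset.univ.filter Q).measurableSet_biUnion fun w _ => hCylMeas w
  refine ⟨hmeasset, ?_⟩
  have hν : ν {b : ℤ → γ | Q (word ℓ b)} = ∑ w ∈ Finset.univ.filter Q, ν (Cyl w) := by
    rw [hset, measure_biUnion_finset hdisj fun w _ => hCylMeas w]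
  rw [hν, ENNReal.toReal_sum fun w _ => measure_ne_top ν _]
  refine Finset.sum_congr rfl fun w _ => ?_
  have hbw : (ν (Cyl w)).toReal = ∏ i ∈ sI, p (fw w i) := hb.2 sI (fw w)
  rw [hbw, hsI, Finset.prod_image (fun a _ b _ h => by exact_mod_cast h)]
  rw [← Fin.prod_univ_eq_prod_range (fun j => p (fw w (j : ℤ))) ℓ]
  refine Finset.prod_congr rfl fun i _ => ?_
  rw [hfw_eval w (i : ℕ) i.isLt]

private lemma bernoulli_nonneg {p : γ → ℝ} {ν : Measure (ℤ → γ)} (hb : IsBernoulli p ν)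
    (a : γ) : 0 ≤ p a := by
  have h : (ν {x : ℤ → γ | ∀ i ∈ ({0} : Finset ℤ), x i = a}).toReal = p a := by
    simpa using hb.2 {0} fun _ => a
  rw [← h]
  exact ENNReal.toReal_nonneg

private lemma bernoulli_sum_one {p : γ → ℝ} {ν : Measure (ℤ → γ)} (hb : IsBernoulli p ν) :
    ∑ a, p a = 1 := by
  haveI := hb.1
  have h := (word_event_eq p hb (ℓ := 1) one_pos fun _ => True).2
  have h1 : {b : ℤ → γ | True} = Set.univ := by simp
  rw [h1, measure_univ, ENNReal.toReal_one] at h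
  have h2 : ∑ w ∈ Finset.univ.filter (fun _ : Fin 1 → γ => True), ∏ i, p (w i)
      = ∑ a, p a := by
    rw [Finset.filter_true]
    exact Fintype.sum_equiv (Equiv.funUnique (Fin 1) γ) _ _ fun w => by
      simp [Equiv.funUnique]
  rw [h2] at h
  exact h.symm

private lemma card_count_eq (ℓ : ℕ) (b : ℤ → γ) (c : γ) :
    (((Finset.range ℓ).filter fun i => b ((i : ℕ) : ℤ) = c).card : ℝ)
      = (((Finset.univ : Finset (Fin ℓ)).filter fun i => word ℓ b i = c).card : ℝ) := by
  congr 1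
  rw [Finset.card_filter, Finset.card_filter]
  exact (Fin.sum_univ_eq_sum_range (fun i => if b ((i : ℕ) : ℤ) = c then 1 else 0) ℓ).symm

end ULLNMeas


/-- Uniform law of large numbers for Bernoulli measures: for every
`δ > 0` there is `L = L(δ)` such that for every Bernoulli measure `p` on `C^ℤ`, the set of
sequences whose letter frequencies on all initial blocks of length `ℓ` deviate from the
expected ones by less than `L/ℓ + δ` has measure greater than `1 - δ`. -/
theorem uniform_lln_bernoulli
    {γ : Type*} [Fintype γ] [DecidableEq γ] [MeasurableSpace γ] [MeasurableSingletonClass γ]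
    (δ : ℝ) (hδ : 0 < δ) :
    ∃ L : ℝ, 0 < L ∧
      ∀ (p : γ → ℝ) (ν : Measure (ℤ → γ)), IsBernoulli p ν →
        (1 - δ : ℝ) <
          (ν {b : ℤ → γ | ∀ ℓ : ℕ, 0 < ℓ → ∀ c : γ,
            |p c - (ℓ : ℝ)⁻¹ *
              (((Finset.range ℓ).filter fun i => b ((i : ℕ) : ℤ) = c).card : ℝ)| <
              L / (ℓ : ℝ) + δ}).toReal := by
  classical
  -- choose the cutoff N
  set K : ℝ := (Fintype.card γ : ℝ) * (16 / δ ^ 4) with hK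
  have hK0 : 0 ≤ K := by positivity
  have hsum : Summable (fun ℓ : ℕ => K / (ℓ : ℝ) ^ 2) := by
    have h2 := Real.summable_one_div_nat_pow.2 (by norm_num : 1 < 2)
    simpa [div_eq_mul_inv, one_div] using h2.mul_left K
  obtain ⟨N, hNtail, hN1⟩ :
      ∃ N : ℕ, (∑' m : ℕ, K / ((m + N : ℕ) : ℝ) ^ 2) < δ / 2 ∧ 1 ≤ N := by
    have htt := tendsto_sum_nat_add (fun ℓ : ℕ => K / (ℓ : ℝ) ^ 2)
    exact ((htt.eventually (gt_mem_nhds (half_pos hδ))).and (eventually_ge_atTop 1)).exists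
  have hNR : (0 : ℝ) < N := by exact_mod_cast hN1
  refine ⟨(N : ℝ), hNR, ?_⟩
  intro p ν hbern
  haveI hprob := hbern.1
  have hp0 : ∀ a, 0 ≤ p a := fun a => bernoulli_nonneg hbern a
  have hp1 : ∑ a, p a = 1 := bernoulli_sum_one hbern
  have hpc1 : ∀ c, p c ≤ 1 := fun c => by
    rw [← hp1]; exact Finset.single_le_sum (fun a _ => hp0 a) (Finset.mem_univ c)
  set G := {b : ℤ → γ | ∀ ℓ : ℕ, 0 < ℓ → ∀ c : γ,
      |p c - (ℓ : ℝ)⁻¹ *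
        (((Finset.range ℓ).filter fun i => b ((i : ℕ) : ℤ) = c).card : ℝ)| <
        (N : ℝ) / (ℓ : ℝ) + δ} with hG
  set Bad : ℕ → γ → Set (ℤ → γ) := fun ℓ c => {b : ℤ → γ | 0 < ℓ ∧
      (N : ℝ) / (ℓ : ℝ) + δ ≤ |p c - (ℓ : ℝ)⁻¹ *
        (((Finset.range ℓ).filter fun i => b ((i : ℕ) : ℤ) = c).card : ℝ)|} with hBad
  have hGc : Gᶜ = ⋃ ℓ, ⋃ c, Bad ℓ c := by
    ext b
    simp only [Set.mem_compl_iff, hG, Set.mem_setOf_eq, Set.mem_iUnion, hBad]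
    push_neg
    constructor
    · rintro ⟨ℓ, hℓ, c, hc⟩
      exact ⟨ℓ, c, hℓ, hc⟩
    · rintro ⟨ℓ, c, hℓ, hc⟩
      exact ⟨ℓ, hℓ, c, hc⟩
  have hBadEq : ∀ (ℓ : ℕ) (c : γ), 0 < ℓ →
      Bad ℓ c = {b : ℤ → γ | (fun w : Fin ℓ → γ =>
        (N : ℝ) / (ℓ : ℝ) + δ ≤ |p c - (ℓ : ℝ)⁻¹ *
          ((Finset.univ.filter fun i => w i = c).card : ℝ)|) (word ℓ b)} := by
    intro ℓ c hℓ
    ext b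
    simp only [hBad, Set.mem_setOf_eq, hℓ, true_and]
    rw [card_count_eq ℓ b c]
  have hmeasBad : ∀ (ℓ : ℕ) (c : γ), MeasurableSet (Bad ℓ c) := by
    intro ℓ c
    rcases Nat.eq_zero_or_pos ℓ with h0 | hℓ
    · subst h0
      have : Bad 0 c = ∅ := by
        ext b; simp [hBad]
      rw [this]; exact MeasurableSet.empty
    · rw [hBadEq ℓ c hℓ]
      exact (word_event_eq p hbern hℓ (fun w : Fin ℓ → γ =>
        (N : ℝ) / (ℓ : ℝ) + δ ≤ |p c - (ℓ : ℝ)⁻¹ *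
          ((Finset.univ.filter fun i => w i = c).card : ℝ)|)).1
  have hGcmeas : MeasurableSet Gᶜ := by
    rw [hGc]
    exact MeasurableSet.iUnion fun ℓ => MeasurableSet.iUnion fun c => hmeasBad ℓ c
  -- the per-length bound
  set f' : ℕ → ℝ := fun ℓ => if N ≤ ℓ then K / (ℓ : ℝ) ^ 2 else 0 with hf'
  have hf'nn : ∀ ℓ, 0 ≤ f' ℓ := by
    intro ℓ; rw [hf']; dsimp only
    split <;> positivity
  have hf'sum : Summable f' := by
    refine Summable.of_nonneg_of_le hf'nn (fun ℓ => ?_) hsum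
    rw [hf']; dsimp only
    split
    · exact le_rfl
    · positivity
  have hbound : ∀ ℓ : ℕ, ν (⋃ c, Bad ℓ c) ≤ ENNReal.ofReal (f' ℓ) := by
    intro ℓ
    rcases le_or_gt ℓ N with hle | hlt
    · -- small ℓ : the bad sets are empty
      have hempty : ∀ c, Bad ℓ c = ∅ := by
        intro c
        ext b
        simp only [hBad, Set.mem_setOf_eq, Set.mem_empty_iff_false, iff_false, not_and, not_le]
        intro hℓ
        have hℓR : (0 : ℝ) < ℓ := by exact_mod_cast hℓ
        set q : ℝ := (ℓ : ℝ)⁻¹ *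
          (((Finset.range ℓ).filter fun i => b ((i : ℕ) : ℤ) = c).card : ℝ) with hq
        have hq0 : 0 ≤ q := by positivity
        have hq1 : q ≤ 1 := by
          rw [hq, inv_mul_le_iff₀ hℓR, mul_one]
          exact_mod_cast (Finset.card_filter_le _ _).trans (Finset.card_range ℓ).le
        have habs : |p c - q| ≤ 1 := by
          rw [abs_le]
          exact ⟨by linarith [hpc1 c, hq1, hq0, hp0 c], by linarith [hpc1 c, hq1, hq0, hp0 c]⟩
        have hdiv : 1 ≤ (N : ℝ) / (ℓ : ℝ) := by
          rw [le_div_iff₀ hℓR, one_mul]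
          exact_mod_cast hle
        linarith
      have : (⋃ c, Bad ℓ c) = ∅ := by simp [hempty]
      rw [this]
      simp
    · -- large ℓ : the fourth-moment bound
      have hℓ : 0 < ℓ := lt_of_le_of_lt (Nat.zero_le N) hlt
      have hℓR : (0 : ℝ) < ℓ := by exact_mod_cast hℓ
      set t : ℝ := (N : ℝ) / (ℓ : ℝ) + δ with htdef
      have htpos : 0 < t := by positivity
      have hone : ∀ c, ν (Bad ℓ c) ≤ ENNReal.ofReal (16 / δ ^ 4 / (ℓ : ℝ) ^ 2) := by
        intro c
        have hwe := word_event_eq p hbern hℓ (fun w : Fin ℓ → γ =>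
          (N : ℝ) / (ℓ : ℝ) + δ ≤ |p c - (ℓ : ℝ)⁻¹ *
            ((Finset.univ.filter fun i => w i = c).card : ℝ)|)
        have hbb := bad_sum_bound p hp0 hp1 c hℓ htpos
        have htoReal : (ν (Bad ℓ c)).toReal ≤ 16 / ((ℓ : ℝ) ^ 2 * t ^ 4) := by
          rw [hBadEq ℓ c hℓ, hwe.2]
          exact hbb
        have hstep : 16 / ((ℓ : ℝ) ^ 2 * t ^ 4) ≤ 16 / δ ^ 4 / (ℓ : ℝ) ^ 2 := by
          rw [div_div]
          refine div_le_div_of_nonneg_left (by norm_num) (by positivity) ?_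
          rw [mul_comm ((ℓ : ℝ) ^ 2) (t ^ 4)] at *
          refine mul_le_mul_of_nonneg_right ?_ (by positivity)
          refine pow_le_pow_left₀ hδ.le ?_ 4
          rw [htdef]
          have : 0 ≤ (N : ℝ) / (ℓ : ℝ) := by positivity
          linarith
        calc ν (Bad ℓ c) = ENNReal.ofReal ((ν (Bad ℓ c)).toReal) :=
              (ENNReal.ofReal_toReal (measure_ne_top ν _)).symm
          _ ≤ ENNReal.ofReal (16 / δ ^ 4 / (ℓ : ℝ) ^ 2) :=
              ENNReal.ofReal_le_ofReal (htoReal.trans hstep)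
      calc ν (⋃ c, Bad ℓ c) ≤ ∑ c, ν (Bad ℓ c) := measure_iUnion_fintype_le ν _
        _ ≤ ∑ _c : γ, ENNReal.ofReal (16 / δ ^ 4 / (ℓ : ℝ) ^ 2) :=
            Finset.sum_le_sum fun c _ => hone c
        _ = ENNReal.ofReal (f' ℓ) := by
            rw [Finset.sum_const, Finset.card_univ, nsmul_eq_mul,
              ← ENNReal.ofReal_natCast (Fintype.card γ), ← ENNReal.ofReal_mul (by positivity)]
            congr 1
            rw [hf']
            simp only [hlt.le, if_pos (le_of_lt hlt), if_true]
            rw [hK]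
            field_simp
  -- summing up
  have htail : (∑' ℓ, f' ℓ) ≤ δ / 2 := by
    have hsplit := Summable.sum_add_tsum_nat_add (f := f') N hf'sum
    have hzero : ∑ ℓ ∈ Finset.range N, f' ℓ = 0 := by
      refine Finset.sum_eq_zero fun ℓ hℓ => ?_
      have hℓ' : ℓ < N := Finset.mem_range.1 hℓ
      rw [hf']
      simp only [if_neg (by omega : ¬ N ≤ ℓ)]
    have hcongr : (∑' m : ℕ, f' (m + N)) = ∑' m : ℕ, K / ((m + N : ℕ) : ℝ) ^ 2 := by
      refine tsum_congr fun m => ?_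
      rw [hf']
      simp only [if_pos (by omega : N ≤ m + N)]
    rw [← hsplit, hzero, zero_add, hcongr]
    exact hNtail.le
  have hGcb : ν Gᶜ ≤ ENNReal.ofReal (δ / 2) := by
    rw [hGc]
    calc ν (⋃ ℓ, ⋃ c, Bad ℓ c) ≤ ∑' ℓ, ν (⋃ c, Bad ℓ c) := measure_iUnion_le _
      _ ≤ ∑' ℓ, ENNReal.ofReal (f' ℓ) := ENNReal.tsum_le_tsum hbound
      _ = ENNReal.ofReal (∑' ℓ, f' ℓ) := (ENNReal.ofReal_tsum_of_nonneg hf'nn hf'sum).symm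
      _ ≤ ENNReal.ofReal (δ / 2) := ENNReal.ofReal_le_ofReal htail
  have h2 : (ν Gᶜ).toReal ≤ δ / 2 :=
    ENNReal.toReal_le_of_le_ofReal (by linarith) hGcb
  have h1 : ν G = 1 - ν Gᶜ := by
    have := prob_compl_eq_one_sub (μ := ν) hGcmeas
    rwa [compl_compl] at this
  have h3 : (ν G).toReal = 1 - (ν Gᶜ).toReal := by
    rw [h1, ENNReal.toReal_sub_of_le prob_le_one ENNReal.one_ne_top, ENNReal.toReal_one]
  rw [h3]
  linarith

end LBPaper
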